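/- arXiv:1502.07380 — 5 statements merged into one kernel-verified Lean document; each statement's English description precedes it below -/
import Mathlib

section
/- Composition of wiring diagrams is associative: given wiring diagrams φ : X → Y, ψ : Y → Z, and χ : Z → W defined by pairs of typed functions (φ_in : X_in → Y_in ⊔ X_out, φ_out : Y_out → X_out) with the stated composition formula, we have χ ∘ (ψ ∘ φ) = (χ ∘ ψ) ∘ φ. -/
/-- A typed finite set: a finite set together with a typing function to `Type`. -/
structure TFS where
  carrier : Type
  fintype : Fintype carrier
  typ : carrier → Type

/-- A typed function between typed finite sets. -/
def TFS.hom (A B : TFS) : Type :=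
  {q : A.carrier → B.carrier // ∀ a, B.typ (q a) = A.typ a}

/-- Disjoint union of typed finite sets. -/
def TFS.sum (A B : TFS) : TFS :=
  letI := A.fintype; letI := B.fintype
  ⟨A.carrier ⊕ B.carrier, inferInstance, Sum.elim A.typ B.typ⟩

/-- The empty typed finite set `(∅, !)`. -/
def TFS.empty : TFS :=
  ⟨PEmpty, inferInstance, fun x => PEmpty.elim x⟩

namespace TFS.hom

def id (A : TFS) : TFS.hom A A := ⟨fun a => a, fun _ => rfl⟩

def comp {A B C : TFS} (g : TFS.hom B C) (f : TFS.hom A B) : TFS.hom A C :=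
  ⟨fun a => g.1 (f.1 a), fun a => (g.2 (f.1 a)).trans (f.2 a)⟩

def sumMap {A B C D : TFS} (f : TFS.hom A B) (g : TFS.hom C D) :
    TFS.hom (A.sum C) (B.sum D) :=
  ⟨Sum.map f.1 g.1, by
    rintro (a | c)
    · exact f.2 a
    · exact g.2 c⟩

def fold {A B : TFS} : TFS.hom ((A.sum B).sum B) (A.sum B) :=
  ⟨Sum.elim (fun x => x) Sum.inr, by rintro ((a | b) | b) <;> rfl⟩

def inl {A B : TFS} : TFS.hom A (A.sum B) := ⟨Sum.inl, fun _ => rfl⟩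

def inr {A B : TFS} : TFS.hom B (A.sum B) := ⟨Sum.inr, fun _ => rfl⟩

def shuffle {A B C D : TFS} :
    TFS.hom ((A.sum B).sum (C.sum D)) ((A.sum C).sum (B.sum D)) :=
  ⟨fun x => match x with
    | .inl (.inl a) => .inl (.inl a)
    | .inl (.inr b) => .inr (.inl b)
    | .inr (.inl c) => .inl (.inr c)
    | .inr (.inr d) => .inr (.inr d),
   by rintro ((a | b) | (c | d)) <;> rfl⟩

def assocHom {A B C : TFS} : TFS.hom ((A.sum B).sum C) (A.sum (B.sum C)) :=
  ⟨fun x => match x with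
    | .inl (.inl a) => .inl a
    | .inl (.inr b) => .inr (.inl b)
    | .inr c => .inr (.inr c),
   by rintro ((a | b) | c) <;> rfl⟩

def assocInvHom {A B C : TFS} : TFS.hom (A.sum (B.sum C)) ((A.sum B).sum C) :=
  ⟨fun x => match x with
    | .inl a => .inl (.inl a)
    | .inr (.inl b) => .inl (.inr b)
    | .inr (.inr c) => .inr c,
   by rintro (a | (b | c)) <;> rfl⟩

end TFS.hom

/-- The dependent product `Ā = ∏_{a ∈ A} τ(a)` of a typed finite set. -/
def TFS.prod (A : TFS) : Type := (a : A.carrier) → A.typ a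

/-- The contravariant action of a typed function on dependent products. -/
def TFS.hom.prodMap {A B : TFS} (q : TFS.hom A B) (f : B.prod) : A.prod :=
  fun a => cast (q.2 a) (f (q.1 a))

def TFS.pair {A B : TFS} (f : A.prod) (g : B.prod) : (A.sum B).prod :=
  fun x => match x with
  | .inl a => f a
  | .inr b => g b

def TFS.fst {A B : TFS} (f : (A.sum B).prod) : A.prod := fun a => f (Sum.inl a)

def TFS.snd {A B : TFS} (f : (A.sum B).prod) : B.prod := fun b => f (Sum.inr b)

/-- A box: a pair of typed finite sets of input and output ports. -/
structure Box where
  inp : TFS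
  out : TFS

/-- Disjoint union of boxes. -/
def Box.tensor (X Y : Box) : Box := ⟨X.inp.sum Y.inp, X.out.sum Y.out⟩

/-- The empty box `(∅, ∅)`. -/
def Box.unit : Box := ⟨TFS.empty, TFS.empty⟩

/-- A wiring diagram `φ : X → Y`. -/
structure WD (X Y : Box) where
  win : TFS.hom X.inp (Y.inp.sum X.out)
  wout : TFS.hom Y.out X.out

/-- The identity wiring diagram. -/
def WD.id (X : Box) : WD X X := ⟨TFS.hom.inl, TFS.hom.id X.out⟩

/-- Composition of wiring diagrams: `WD.comp ψ φ` is `ψ ∘ φ`. -/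
def WD.comp {X Y Z : Box} (ψ : WD Y Z) (φ : WD X Y) : WD X Z where
  win := TFS.hom.fold.comp
    ((((TFS.hom.id Z.inp).sumMap φ.wout).sumMap (TFS.hom.id X.out)).comp
      ((ψ.win.sumMap (TFS.hom.id X.out)).comp φ.win))
  wout := φ.wout.comp ψ.wout

/-- Disjoint union of wiring diagrams. -/
def WD.tensor {X X' Y Y' : Box} (φ : WD X Y) (φ' : WD X' Y') :
    WD (X.tensor X') (Y.tensor Y') where
  win := TFS.hom.shuffle.comp (φ.win.sumMap φ'.win)
  wout := φ.wout.sumMap φ'.wout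

/-- A modal box: a mode set together with an interface function. -/
structure ModalBox where
  mode : Type
  box : mode → Box

/-- A mode-dependent network `(ε, σ) : (M, X) → (N, Y)`; the typing of `ε`
encodes `dom (ε m) = X m` and `cod (ε m) = Y (σ m)`. -/
structure MDNHom (A B : ModalBox) where
  σ : A.mode → B.mode
  ε : (m : A.mode) → WD (A.box m) (B.box (σ m))

def MDNId (A : ModalBox) : MDNHom A A := ⟨fun m => m, fun m => WD.id (A.box m)⟩

/-- `MDNComp g f` is the composite `g ∘ f` in MDN. -/
def MDNComp {A B C : ModalBox} (g : MDNHom B C) (f : MDNHom A B) : MDNHom A C :=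
  ⟨fun m => g.σ (f.σ m), fun m => WD.comp (g.ε (f.σ m)) (f.ε m)⟩

/-- Monoidal product of modal boxes. -/
def ModalBox.tensor (A B : ModalBox) : ModalBox :=
  ⟨A.mode × B.mode, fun p => (A.box p.1).tensor (B.box p.2)⟩

/-- The monoidal unit `({∗}, ∅)` of MDN. -/
def ModalBox.unit : ModalBox := ⟨PUnit, fun _ => Box.unit⟩

/-- Monoidal product of mode-dependent networks. -/
def MDNTensorHom {A A' B B' : ModalBox} (f : MDNHom A A') (g : MDNHom B B') :
    MDNHom (A.tensor B) (A'.tensor B') :=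
  ⟨fun p => (f.σ p.1, g.σ p.2), fun p => (f.ε p.1).tensor (g.ε p.2)⟩

/-- A modal dynamical system on a modal box. -/
structure MDS (A : ModalBox) where
  S : Type
  q : S → A.mode
  fIn : (s : S) → (A.box (q s)).inp.prod → S
  fOut : (s : S) → (A.box (q s)).out.prod

/-- The action of `P` on a morphism of MDN. -/
def MDS.map {A B : ModalBox} (h : MDNHom A B) (D : MDS A) : MDS B where
  S := D.S
  q := fun s => h.σ (D.q s)
  fIn := fun s y => D.fIn s ((h.ε (D.q s)).win.prodMap (TFS.pair y (D.fOut s)))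
  fOut := fun s => (h.ε (D.q s)).wout.prodMap (D.fOut s)


/-- Composition of wiring diagrams is associative. -/
theorem wd_comp_assoc {X Y Z W : Box} (φ : WD X Y) (ψ : WD Y Z) (χ : WD Z W) :
    WD.comp χ (WD.comp ψ φ) = WD.comp (WD.comp χ ψ) φ := by
  have h1 : (WD.comp χ (WD.comp ψ φ)).win = (WD.comp (WD.comp χ ψ) φ).win := by
    apply Subtype.ext
    funext a
    simp only [WD.comp, TFS.hom.comp, TFS.hom.fold, TFS.hom.sumMap, TFS.hom.id]
    rcases hφ : φ.win.1 a with y | x <;>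
      simp only [TFS.sum, hφ, Sum.map_inl, Sum.map_inr, Sum.elim_inl, Sum.elim_inr]
    rcases hψ : ψ.win.1 y with z | x' <;>
      simp only [TFS.sum, hψ, Sum.map_inl, Sum.map_inr, Sum.elim_inl, Sum.elim_inr]
    rcases hχ : χ.win.1 z with w | x'' <;>
      simp only [TFS.sum, hχ, Sum.map_inl, Sum.map_inr, Sum.elim_inl, Sum.elim_inr]
  have h2 : (WD.comp χ (WD.comp ψ φ)).wout = (WD.comp (WD.comp χ ψ) φ).wout := rfl
  cases h : WD.comp χ (WD.comp ψ φ)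
  cases h' : WD.comp (WD.comp χ ψ) φ
  simp_all
end

section
/- Mode-dependent networks form a category MDN: objects are pairs (M, X) with M a set and X : M → Ob(WD); morphisms (M,X) → (N,Y) are pairs (ε, σ) with σ : M → N and ε : M → Mor(WD) satisfying dom(ε(m)) = X(m) and cod(ε(m)) = Y(σ(m)); composition (ε₁,σ₁) ∘ (ε₀,σ₀) = (m ↦ ε₁(σ₀(m)) ∘_WD ε₀(m), σ₁ ∘ σ₀) is associative and unital, with identity (m ↦ id_{X(m)}, id_M). -/
theorem WD.ext' {X Y : Box} {φ ψ : WD X Y} (h1 : φ.win = ψ.win)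
    (h2 : φ.wout = ψ.wout) : φ = ψ := by
  cases φ; cases ψ; simp_all

theorem WD.id_comp {X Y : Box} (φ : WD X Y) : WD.comp (WD.id Y) φ = φ := by
  refine WD.ext' ?_ rfl
  apply Subtype.ext
  funext x
  simp only [WD.comp, WD.id, TFS.hom.comp, TFS.hom.sumMap, TFS.hom.fold, TFS.hom.id,
    TFS.hom.inl]
  rcases h : φ.win.1 x with a | b <;> rfl

theorem WD.comp_id {X Y : Box} (φ : WD X Y) : WD.comp φ (WD.id X) = φ := by
  refine WD.ext' ?_ rfl
  apply Subtype.ext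
  funext x
  simp only [WD.comp, WD.id, TFS.hom.comp, TFS.hom.sumMap, TFS.hom.fold, TFS.hom.id,
    TFS.hom.inl]
  rcases h : φ.win.1 x with a | b <;> erw [Sum.map_inl, h] <;> rfl

theorem WD.assoc {W X Y Z : Box} (φ : WD W X) (ψ : WD X Y) (χ : WD Y Z) :
    WD.comp χ (WD.comp ψ φ) = WD.comp (WD.comp χ ψ) φ := by
  refine WD.ext' ?_ rfl
  apply Subtype.ext
  funext x
  simp only [WD.comp, TFS.hom.comp, TFS.hom.sumMap, TFS.hom.fold, TFS.hom.id]
  rcases h : φ.win.1 x with a | b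
  · change Sum.elim (fun x => x) Sum.inr (Sum.map (Sum.map (fun a => a) fun a => φ.wout.1 (ψ.wout.1 a))
        (fun a => a) (Sum.map χ.win.1 (fun a => a) (Sum.elim (fun x => x) Sum.inr
          (Sum.map (Sum.map (fun a => a) φ.wout.1) (fun a => a)
            (Sum.inl (ψ.win.1 a : Y.inp.carrier ⊕ X.out.carrier)))))) =
      Sum.elim (fun x => x) Sum.inr (Sum.map (Sum.map (fun a => a) φ.wout.1) (fun a => a)
        (Sum.inl (Sum.elim (fun x => x) Sum.inr (Sum.map (Sum.map (fun a => a) ψ.wout.1) (fun a => a)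
          (Sum.map χ.win.1 (fun a => a) (ψ.win.1 a : Y.inp.carrier ⊕ X.out.carrier))))))
    rcases h2 : ψ.win.1 a with c | d
    · change Sum.elim (fun x => x) Sum.inr (Sum.map (Sum.map (fun a => a) fun a => φ.wout.1 (ψ.wout.1 a))
          (fun a => a) (Sum.inl (χ.win.1 c : Z.inp.carrier ⊕ Y.out.carrier))) =
        Sum.elim (fun x => x) Sum.inr (Sum.map (Sum.map (fun a => a) φ.wout.1) (fun a => a)
          (Sum.inl (Sum.elim (fun x => x) Sum.inr (Sum.map (Sum.map (fun a => a) ψ.wout.1) (fun a => a)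
            (Sum.inl (χ.win.1 c : Z.inp.carrier ⊕ Y.out.carrier))))))
      rcases h3 : χ.win.1 c with e | f <;> rfl
    · rfl
  · rfl

/-- mode-dependent networks form a category MDN: composition is
associative and unital with the indicated identities. -/
theorem mdn_category :
    (∀ (A B C D : ModalBox) (f : MDNHom A B) (g : MDNHom B C) (h : MDNHom C D),
      MDNComp h (MDNComp g f) = MDNComp (MDNComp h g) f) ∧
    (∀ (A B : ModalBox) (f : MDNHom A B), MDNComp f (MDNId A) = f) ∧
    (∀ (A B : ModalBox) (f : MDNHom A B), MDNComp (MDNId B) f = f) := by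
  refine ⟨fun A B C D f g h => ?_, fun A B f => ?_, fun A B f => ?_⟩
  · simp only [MDNComp]
    congr 1
    funext m
    exact WD.assoc (f.ε m) (g.ε (f.σ m)) (h.ε (g.σ (f.σ m)))
  · cases f; simp only [MDNComp, MDNId]
    congr 1
    funext m
    exact WD.comp_id _
  · cases f; simp only [MDNComp, MDNId]
    congr 1
    funext m
    exact WD.id_comp _
end

section
/- There is a strong monoidal functor I : WD → MDN given on objects by I(X) = ({∗}, X) and on morphisms by sending φ : X → Y to (ε_φ, id_{∗}) where ε_φ(∗) = φ. In particular, I preserves identities and composition, and I(X ⊔ Y) ≅ I(X) ⊗ I(Y). -/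
/-- The functor `I : WD → MDN` on objects. -/
def IObj (X : Box) : ModalBox := ⟨PUnit, fun _ => X⟩

/-- The functor `I : WD → MDN` on morphisms. -/
def IHom {X Y : Box} (φ : WD X Y) : MDNHom (IObj X) (IObj Y) :=
  ⟨fun _ => PUnit.unit, fun _ => φ⟩

lemma WD.comp_id_id (X : Box) : WD.comp (WD.id X) (WD.id X) = WD.id X := by
  show WD.mk _ _ = _
  congr 1

/-- `I : WD → MDN` is a strong monoidal functor: it preserves
identities and composition, sends the unit to the unit, and
`I(X ⊔ Y) ≅ I(X) ⊗ I(Y)`. -/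
theorem I_strong_monoidal :
    (∀ X : Box, IHom (WD.id X) = MDNId (IObj X)) ∧
    (∀ (X Y Z : Box) (φ : WD X Y) (ψ : WD Y Z),
      IHom (WD.comp ψ φ) = MDNComp (IHom ψ) (IHom φ)) ∧
    (IObj Box.unit = ModalBox.unit) ∧
    (∀ X Y : Box,
      ∃ (u : MDNHom (IObj (X.tensor Y)) ((IObj X).tensor (IObj Y)))
        (v : MDNHom ((IObj X).tensor (IObj Y)) (IObj (X.tensor Y))),
        MDNComp v u = MDNId (IObj (X.tensor Y)) ∧
        MDNComp u v = MDNId ((IObj X).tensor (IObj Y))) := by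
  refine ⟨fun X => rfl, fun X Y Z φ ψ => rfl, rfl, fun X Y => ?_⟩
  refine ⟨⟨fun _ => (PUnit.unit, PUnit.unit), fun _ => WD.id (X.tensor Y)⟩,
          ⟨fun _ => PUnit.unit, fun _ => WD.id (X.tensor Y)⟩, ?_, ?_⟩
  · show MDNHom.mk _ _ = MDNHom.mk _ _
    congr 1
  · show MDNHom.mk _ _ = MDNHom.mk _ _
    congr 1
end

section
/- The assignment P on a modal box (M, X), defined as the set of 4-tuples (S, q, f_in, f_out) with S a set, q : S → M, f_in(s) : X_in‾(q(s)) → S for each s ∈ S, and f_out(s) ∈ X_out‾(q(s)), together with the action on morphisms P(ε,σ)(S,q,f) = (S, σ∘q, g) defined by g_out(s) = ε_out‾(q(s))(f_out(s)) and g_in(s)(y) = f_in(s)(ε_in‾(q(s))(y, f_out(s))), is functorial: P((ε₁,σ₁) ∘ (ε₀,σ₀)) = P(ε₁,σ₁) ∘ P(ε₀,σ₀). -/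
lemma prodMap_comp {A B C : TFS} (g : TFS.hom B C) (f : TFS.hom A B) (x : C.prod) :
    (g.comp f).prodMap x = f.prodMap (g.prodMap x) := by
  funext a; simp [TFS.hom.comp, TFS.hom.prodMap, cast_cast]

lemma prodMap_id {A : TFS} (x : A.prod) : (TFS.hom.id A).prodMap x = x := by
  funext a; simp [TFS.hom.id, TFS.hom.prodMap]; rfl

lemma prodMap_sumMap_pair {A B C D : TFS} (f : TFS.hom A B) (g : TFS.hom C D)
    (u : B.prod) (v : D.prod) :
    (f.sumMap g).prodMap (TFS.pair u v) = TFS.pair (f.prodMap u) (g.prodMap v) := by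
  funext x; rcases x with a | c <;> rfl

lemma prodMap_fold_pair {A B : TFS} (u : A.prod) (v : B.prod) :
    (TFS.hom.fold).prodMap (TFS.pair u v) = TFS.pair (TFS.pair u v) v := by
  funext x; rcases x with (a | b) | b <;> simp [TFS.hom.fold, TFS.hom.prodMap, TFS.pair] <;> rfl

/-- `P` is functorial:
`P((ε₁,σ₁) ∘ (ε₀,σ₀)) = P(ε₁,σ₁) ∘ P(ε₀,σ₀)`. -/
theorem P_functorial {A B C : ModalBox} (f : MDNHom A B) (g : MDNHom B C)
    (D : MDS A) : MDS.map (MDNComp g f) D = MDS.map g (MDS.map f D) := by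
  show MDS.mk D.S (fun s => g.σ (f.σ (D.q s))) _ _
     = MDS.mk D.S (fun s => g.σ (f.σ (D.q s))) _ _
  congr 1
  · funext s y
    show D.fIn s _ = D.fIn s _
    congr 1
    show (WD.comp (g.ε (f.σ (D.q s))) (f.ε (D.q s))).win.prodMap _ = _
    rw [WD.comp]
    erw [prodMap_comp, prodMap_comp, prodMap_fold_pair, prodMap_comp, prodMap_sumMap_pair,
      prodMap_sumMap_pair, prodMap_id, prodMap_sumMap_pair, prodMap_id, prodMap_id]
    rfl
  · funext s
    show (WD.comp (g.ε (f.σ (D.q s))) (f.ε (D.q s))).wout.prodMap _ = _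
    rw [WD.comp]
    simp only [prodMap_comp]
    rfl
end

section
/- The coherence maps making P lax monoidal — namely the product map P(M,X) × P(N,Y) → P(M×N, X⊔Y) given by (S,q,f), (T,r,g) ↦ (S×T, q×r, f×g) (using the isomorphism (A ⊔ B)‾ ≅ Ā × B̄), and the unit map {∗} → P({∗},∅) picking the trivial system ({∗},!,!,!) — are natural in (M,X) and (N,Y) and satisfy the associativity and unitality axioms of a lax monoidal functor P : MDN → Set. -/
/-- The coherence (product) map of the lax monoidal functor `P`. -/
def MDS.tensor {A B : ModalBox} (D : MDS A) (E : MDS B) : MDS (A.tensor B) where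
  S := D.S × E.S
  q := fun p => (D.q p.1, E.q p.2)
  fIn := fun p y => (D.fIn p.1 (TFS.fst y), E.fIn p.2 (TFS.snd y))
  fOut := fun p => TFS.pair (D.fOut p.1) (E.fOut p.2)

/-- The unit coherence map of `P`: the trivial system `({∗}, !, !, !)`. -/
def MDS.unitSystem : MDS ModalBox.unit where
  S := PUnit
  q := fun _ => PUnit.unit
  fIn := fun s _ => s
  fOut := fun _ => fun x => PEmpty.elim x

/-- The associator wiring diagram. -/
def WD.assocWD (X Y Z : Box) :
    WD ((X.tensor Y).tensor Z) (X.tensor (Y.tensor Z)) where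
  win := TFS.hom.inl.comp TFS.hom.assocHom
  wout := TFS.hom.assocInvHom

/-- The associator of MDN. -/
def MDNAssoc (A B C : ModalBox) :
    MDNHom ((A.tensor B).tensor C) (A.tensor (B.tensor C)) :=
  ⟨fun p => (p.1.1, (p.1.2, p.2)), fun p => WD.assocWD _ _ _⟩

/-- The left unitor wiring diagram. -/
def WD.leftUnitorWD (X : Box) : WD (Box.unit.tensor X) X where
  win := ⟨fun x => match x with
      | .inl e => PEmpty.elim e
      | .inr a => .inl a,
    by
      rintro (e | a)
      · exact PEmpty.elim e
      · rfl⟩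
  wout := TFS.hom.inr

/-- The right unitor wiring diagram. -/
def WD.rightUnitorWD (X : Box) : WD (X.tensor Box.unit) X where
  win := ⟨fun x => match x with
      | .inl a => .inl a
      | .inr e => PEmpty.elim e,
    by
      rintro (a | e)
      · rfl
      · exact PEmpty.elim e⟩
  wout := TFS.hom.inl

/-- The left unitor of MDN. -/
def MDNLeftUnitor (A : ModalBox) : MDNHom (ModalBox.unit.tensor A) A :=
  ⟨fun p => p.2, fun p => WD.leftUnitorWD (A.box p.2)⟩

/-- The right unitor of MDN. -/
def MDNRightUnitor (A : ModalBox) : MDNHom (A.tensor ModalBox.unit) A :=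
  ⟨fun p => p.1, fun p => WD.rightUnitorWD (A.box p.1)⟩

/-- Isomorphism of modal dynamical systems (equality of the underlying data
transported along a bijection of state sets). -/
def MDS.Equivalent {A : ModalBox} (D E : MDS A) : Prop :=
  ∃ e : D.S ≃ E.S,
    (∀ s, E.q (e s) = D.q s) ∧
    (∀ s, HEq (E.fIn (e s)) (fun x => e (D.fIn s x))) ∧
    (∀ s, HEq (E.fOut (e s)) (D.fOut s))


lemma MDS.ext2 {A : ModalBox} {D E : MDS A} (hS : D.S = E.S) (hq : HEq D.q E.q)
    (hin : HEq D.fIn E.fIn) (hout : HEq D.fOut E.fOut) : D = E := by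
  cases D; cases E
  cases hS; cases hq; cases hin; cases hout; rfl

lemma cast_heq_cast {α β γ : Type} (h1 : α = γ) (h2 : β = γ) {x : α} {y : β}
    (h : HEq x y) : cast h1 x = cast h2 y := by
  subst h1; subst h2; exact congrArg _ (eq_of_heq h)

/-- the coherence maps of `P` are natural and satisfy the
associativity and unitality axioms of a lax monoidal functor `P : MDN → Set`. -/
theorem P_lax_monoidal :
    (∀ (A A' B B' : ModalBox) (f : MDNHom A A') (g : MDNHom B B')
        (D : MDS A) (E : MDS B),
        MDS.map (MDNTensorHom f g) (D.tensor E) =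
          (MDS.map f D).tensor (MDS.map g E)) ∧
    (∀ (A B C : ModalBox) (D : MDS A) (E : MDS B) (F : MDS C),
        MDS.Equivalent (MDS.map (MDNAssoc A B C) ((D.tensor E).tensor F))
          (D.tensor (E.tensor F))) ∧
    (∀ (A : ModalBox) (D : MDS A),
        MDS.Equivalent (MDS.map (MDNLeftUnitor A) (MDS.unitSystem.tensor D)) D) ∧
    (∀ (A : ModalBox) (D : MDS A),
        MDS.Equivalent (MDS.map (MDNRightUnitor A) (D.tensor MDS.unitSystem)) D)
    := by
  refine ⟨?_, ?_, ?_, ?_⟩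
  · intro A A' B B' f g D E
    refine MDS.ext2 rfl HEq.rfl (heq_of_eq ?_) (heq_of_eq ?_)
    · funext s y
      refine Prod.ext ?_ ?_
      · show D.fIn s.1 _ = D.fIn s.1 _
        congr 1
        funext a
        simp only [MDNTensorHom, WD.tensor, TFS.hom.comp, TFS.hom.sumMap, TFS.hom.prodMap,
          TFS.fst, TFS.snd, MDS.tensor, Sum.map]
        refine cast_heq_cast _ _ ?_
        simp only [Sum.elim_inl, Sum.elim_inr, Function.comp]
        generalize (f.ε (D.q s.1)).win.1 a = w
        cases w <;> rfl
      · show E.fIn s.2 _ = E.fIn s.2 _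
        congr 1
        funext a
        simp only [MDNTensorHom, WD.tensor, TFS.hom.comp, TFS.hom.sumMap, TFS.hom.prodMap,
          TFS.fst, TFS.snd, MDS.tensor, Sum.map]
        refine cast_heq_cast _ _ ?_
        simp only [Sum.elim_inl, Sum.elim_inr, Function.comp]
        generalize (g.ε (E.q s.2)).win.1 a = w
        cases w <;> rfl
    · funext s; funext x; rcases x with (a | b) <;> rfl
  · intro A B C D E F
    refine ⟨Equiv.prodAssoc _ _ _, fun s => rfl, fun s => heq_of_eq ?_, fun s => heq_of_eq ?_⟩
    · funext y; rfl
    · funext x; rcases x with (a | (b | c)) <;> rfl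
  · intro A D
    refine ⟨Equiv.punitProd _, fun s => rfl, fun s => heq_of_eq ?_, fun s => heq_of_eq ?_⟩
    · funext y; rfl
    · funext x; rfl
  · intro A D
    refine ⟨Equiv.prodPUnit _, fun s => rfl, fun s => heq_of_eq ?_, fun s => heq_of_eq ?_⟩
    · funext y; rfl
    · funext x; rfl
end
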